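/- arXiv:2107.04480 — 2 statements merged into one kernel-verified Lean document; each statement's English description precedes it below -/
import Mathlib

section
/- Let ε ~ N(0, σ_ε²) and δ ~ N(0, σ_δ²) be independent, v, θ real constants, and Δc = v cosθ (cos δ − 1) − v sinθ sin δ + ε cosθ cos δ − ε sinθ sin δ. Then Var[Δc] = v² e^{-σ_δ²} [cos²θ (cosh σ_δ² − 1) + sin²θ sinh σ_δ²] + σ_ε² e^{-σ_δ²} [cos²θ cosh σ_δ² + sin²θ sinh σ_δ²]. -/
open MeasureTheory ProbabilityTheory Real Set


lemma my_integral_cos_gaussian {b : ℝ} (hb : 0 < b) (t : ℝ) :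
    ∫ x : ℝ, Real.cos (t * x) * Real.exp (-b * x ^ 2)
      = Real.sqrt (π / b) * Real.exp (-t ^ 2 / (4 * b)) := by
  have hb' : (0:ℝ) < ((b:ℂ)).re := by simpa using hb
  have key := fourierIntegral_gaussian (b := (b:ℂ)) hb' (t : ℂ)
  have hint : Integrable (fun x : ℝ => Complex.exp (Complex.I * t * x) * Complex.exp (-(b:ℂ) * x ^ 2)) := by
    have := integrable_cexp_quadratic hb' (Complex.I * t) 0
    refine this.congr (ae_of_all _ fun x => ?_)
    simp only [← Complex.exp_add]; ring_nf
  have hre := congrArg Complex.re key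
  rw [show ((∫ (x : ℝ), Complex.exp (Complex.I * t * x) * Complex.exp (-(b:ℂ) * x ^ 2)).re)
    = ∫ x : ℝ, (Complex.exp (Complex.I * t * x) * Complex.exp (-(b:ℂ) * x ^ 2)).re from
      (integral_re hint).symm] at hre
  have hpt : ∀ x : ℝ, (Complex.exp (Complex.I * t * x) * Complex.exp (-(b:ℂ) * x ^ 2)).re
      = Real.cos (t * x) * Real.exp (-b * x ^ 2) := by
    intro x
    rw [← Complex.exp_add, Complex.exp_re]
    have h1 : (Complex.I * (t:ℂ) * (x:ℂ) + -(b:ℂ) * (x:ℂ) ^ 2).re = -b * x ^ 2 := by simp [← Complex.ofReal_pow]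
    have h2 : (Complex.I * (t:ℂ) * (x:ℂ) + -(b:ℂ) * (x:ℂ) ^ 2).im = t * x := by simp [← Complex.ofReal_pow]
    rw [h1, h2]; ring
  have hrhs : (((π:ℂ) / b) ^ (1 / 2 : ℂ) * Complex.exp (-(t:ℂ) ^ 2 / (4 * b))).re
      = Real.sqrt (π / b) * Real.exp (-t ^ 2 / (4 * b)) := by
    have h3 : ((π:ℂ) / b) ^ (1 / 2 : ℂ) = ((Real.sqrt (π / b) : ℝ) : ℂ) := by
      rw [Real.sqrt_eq_rpow, Complex.ofReal_cpow (by positivity)]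
      push_cast; ring_nf
    have h4 : -(t:ℂ) ^ 2 / (4 * b) = ((-t ^ 2 / (4 * b) : ℝ) : ℂ) := by push_cast; ring
    rw [h3, h4, ← Complex.ofReal_exp, ← Complex.ofReal_mul, Complex.ofReal_re]
  rw [← hrhs, ← hre]
  exact integral_congr_ae (ae_of_all _ fun x => (hpt x).symm)


lemma my_integral_sq_gaussian {b : ℝ} (hb : 0 < b) :
    ∫ x : ℝ, x ^ 2 * Real.exp (-b * x ^ 2) = Real.sqrt (π / b) / (2 * b) := by
  have habs : ∫ x : ℝ, x ^ 2 * Real.exp (-b * x ^ 2)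
      = 2 * ∫ x in Ioi (0:ℝ), x ^ 2 * Real.exp (-b * x ^ 2) := by
    rw [← integral_comp_abs (f := fun x => x ^ 2 * Real.exp (-b * x ^ 2))]
    congr 1; ext x; rw [_root_.sq_abs]
  have hIoi : ∫ x in Ioi (0:ℝ), x ^ 2 * Real.exp (-b * x ^ 2)
      = b ^ (-(3:ℝ) / 2) * (1 / 2) * Real.Gamma (3 / 2) := by
    have := integral_rpow_mul_exp_neg_mul_rpow (p := 2) (q := 2) (b := b)
      (by norm_num) (by norm_num) hb
    rw [show ((2:ℝ) + 1) = 3 by norm_num] at this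
    rw [← this]
    refine setIntegral_congr_fun measurableSet_Ioi (fun x _ => ?_)
    norm_cast
  have hGamma : Real.Gamma (3 / 2) = Real.sqrt π / 2 := by
    rw [show (3:ℝ)/2 = 1/2 + 1 by norm_num, Real.Gamma_add_one (by norm_num),
      Real.Gamma_one_half_eq]
    ring
  rw [habs, hIoi, hGamma]
  rw [show (-(3:ℝ)/2) = -1 + (-(1:ℝ)/2) by norm_num, Real.rpow_add hb, Real.rpow_neg_one,
    Real.sqrt_div' π hb.le]
  rw [show (-1/2 : ℝ) = -(1/2) by norm_num, Real.rpow_neg hb.le, ← Real.sqrt_eq_rpow]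
  have hsb : Real.sqrt b ≠ 0 := by positivity
  field_simp

lemma my_gauss_pdf_eq {w : NNReal} (hw : w ≠ 0) (x : ℝ) :
    gaussianPDFReal 0 w x
      = (Real.sqrt (2 * π * w))⁻¹ * Real.exp (-(2 * (w:ℝ))⁻¹ * x ^ 2) := by
  have hw' : (0:ℝ) < w := by positivity
  simp only [gaussianPDFReal, sub_zero]
  congr 1
  rw [show -x ^ 2 / (2 * (w:ℝ)) = -(2 * (w:ℝ))⁻¹ * x ^ 2 by ring]

lemma my_gauss_integral_eq {w : NNReal} (hw : w ≠ 0) (f : ℝ → ℝ) :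
    ∫ x, f x ∂(gaussianReal 0 w) = ∫ x, gaussianPDFReal 0 w x * f x := by
  rw [gaussianReal_of_var_ne_zero 0 hw]
  have h : (volume.withDensity (gaussianPDF 0 w))
      = volume.withDensity (fun x => ((Real.toNNReal (gaussianPDFReal 0 w x) : NNReal) : ENNReal)) := by
    simp only [gaussianPDF_def, ENNReal.ofReal]
  rw [h, integral_withDensity_eq_integral_smul ((measurable_gaussianPDFReal 0 w).real_toNNReal) f]
  congr 1; ext x
  simp [NNReal.smul_def, Real.coe_toNNReal _ (gaussianPDFReal_nonneg 0 w x)]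

lemma my_gauss_integrable_iff {w : NNReal} (hw : w ≠ 0) (f : ℝ → ℝ) :
    Integrable f (gaussianReal 0 w)
      ↔ Integrable (fun x => gaussianPDFReal 0 w x * f x) volume := by
  rw [gaussianReal_of_var_ne_zero 0 hw]
  have h : (volume.withDensity (gaussianPDF 0 w))
      = volume.withDensity (fun x => ((Real.toNNReal (gaussianPDFReal 0 w x) : NNReal) : ENNReal)) := by
    simp only [gaussianPDF_def, ENNReal.ofReal]
  rw [h, integrable_withDensity_iff_integrable_smul
    ((measurable_gaussianPDFReal 0 w).real_toNNReal)]
  constructor <;> intro h' <;> refine h'.congr (ae_of_all _ fun x => ?_) <;>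
    simp [NNReal.smul_def, Real.coe_toNNReal _ (gaussianPDFReal_nonneg 0 w x)]

lemma my_gauss_map_neg (w : NNReal) :
    (gaussianReal 0 w).map (fun x : ℝ => -x) = gaussianReal 0 w := by
  have h := gaussianReal_map_const_mul (μ := 0) (v := w) (-1)
  have h2 : (fun x : ℝ => -x) = ((-1 : ℝ) * ·) := by funext x; ring
  rw [h2, h]
  norm_num

lemma my_gauss_odd (w : NNReal) {f : ℝ → ℝ} (hf : Measurable f)
    (hodd : ∀ x, f (-x) = - f x) : ∫ x, f x ∂(gaussianReal 0 w) = 0 := by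
  have h1 : ∫ x, f x ∂(gaussianReal 0 w)
      = ∫ x, f x ∂((gaussianReal 0 w).map (fun x : ℝ => -x)) := by
    rw [my_gauss_map_neg]
  rw [integral_map (by fun_prop) hf.aestronglyMeasurable] at h1
  simp_rw [hodd, integral_neg] at h1
  linarith

lemma my_integrable_of_bdd {α : Type*} [MeasurableSpace α] {μ : Measure α} [IsFiniteMeasure μ]
    {f : α → ℝ} (hm : AEStronglyMeasurable f μ) (C : ℝ) (h : ∀ x, |f x| ≤ C) :
    Integrable f μ :=
  (integrable_const C).mono' hm (ae_of_all _ fun x => by simpa using h x)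

lemma my_gauss_cos (w : NNReal) (t : ℝ) :
    ∫ x, Real.cos (t * x) ∂(gaussianReal 0 w) = Real.exp (-(t ^ 2 * w) / 2) := by
  by_cases hw : w = 0
  · subst hw
    rw [gaussianReal_zero_var, integral_dirac]
    norm_num
  · have hw' : (0:ℝ) < w := by positivity
    have hb : (0:ℝ) < (2 * (w:ℝ))⁻¹ := by positivity
    rw [my_gauss_integral_eq hw]
    have hpt : ∀ x : ℝ, gaussianPDFReal 0 w x * Real.cos (t * x)
        = (Real.sqrt (2 * π * w))⁻¹ * (Real.cos (t * x) * Real.exp (-(2 * (w:ℝ))⁻¹ * x ^ 2)) := by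
      intro x; rw [my_gauss_pdf_eq hw]; ring
    simp_rw [hpt]
    rw [integral_const_mul, my_integral_cos_gaussian hb t]
    rw [show π / (2 * (w:ℝ))⁻¹ = 2 * π * (w:ℝ) by field_simp]
    rw [show -t ^ 2 / (4 * (2 * (w:ℝ))⁻¹) = -(t ^ 2 * (w:ℝ)) / 2 by field_simp; ring]
    rw [← mul_assoc, inv_mul_cancel₀ (by positivity), one_mul]

lemma my_gauss_sq (w : NNReal) :
    ∫ x, x ^ 2 ∂(gaussianReal 0 w) = (w : ℝ) := by
  by_cases hw : w = 0
  · subst hw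
    rw [gaussianReal_zero_var, integral_dirac]
    norm_num
  · have hw' : (0:ℝ) < w := by positivity
    have hb : (0:ℝ) < (2 * (w:ℝ))⁻¹ := by positivity
    rw [my_gauss_integral_eq hw]
    have hpt : ∀ x : ℝ, gaussianPDFReal 0 w x * x ^ 2
        = (Real.sqrt (2 * π * w))⁻¹ * (x ^ 2 * Real.exp (-(2 * (w:ℝ))⁻¹ * x ^ 2)) := by
      intro x; rw [my_gauss_pdf_eq hw]; ring
    simp_rw [hpt]
    rw [integral_const_mul, my_integral_sq_gaussian hb]
    rw [show π / (2 * (w:ℝ))⁻¹ = 2 * π * (w:ℝ) by field_simp]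
    have hs : Real.sqrt (2 * π * (w:ℝ)) ≠ 0 := by positivity
    field_simp

lemma my_gauss_integrable_sq (w : NNReal) :
    Integrable (fun x : ℝ => x ^ 2) (gaussianReal 0 w) := by
  by_cases hw : w = 0
  · subst hw
    rw [gaussianReal_zero_var]
    exact (integrable_const (((0:ℝ)) ^ 2)).congr (ae_eq_dirac (fun x : ℝ => x ^ 2)).symm
  · have hw' : (0:ℝ) < w := by positivity
    have hb : (0:ℝ) < (2 * (w:ℝ))⁻¹ := by positivity
    rw [my_gauss_integrable_iff hw]
    have base : Integrable (fun x : ℝ => x ^ 2 * Real.exp (-(2 * (w:ℝ))⁻¹ * x ^ 2)) := by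
      have h := integrable_rpow_mul_exp_neg_mul_sq hb (s := 2) (by norm_num)
      refine h.congr (ae_of_all _ fun x => ?_)
      norm_cast
    refine (base.const_mul ((Real.sqrt (2 * π * w))⁻¹)).congr (ae_of_all _ fun x => ?_)
    simp only [my_gauss_pdf_eq hw]; ring

lemma my_gauss_integrable_id (w : NNReal) :
    Integrable (fun x : ℝ => x) (gaussianReal 0 w) := by
  by_cases hw : w = 0
  · subst hw
    rw [gaussianReal_zero_var]
    exact (integrable_const ((0:ℝ))).congr (ae_eq_dirac (fun x : ℝ => x)).symm
  · have hw' : (0:ℝ) < w := by positivity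
    have hb : (0:ℝ) < (2 * (w:ℝ))⁻¹ := by positivity
    rw [my_gauss_integrable_iff hw]
    have base := integrable_mul_exp_neg_mul_sq hb
    refine (base.const_mul ((Real.sqrt (2 * π * w))⁻¹)).congr (ae_of_all _ fun x => ?_)
    simp only [my_gauss_pdf_eq hw]; ring

lemma my_gauss_sin (w : NNReal) (t : ℝ) :
    ∫ x, Real.sin (t * x) ∂(gaussianReal 0 w) = 0 := by
  refine my_gauss_odd w (by fun_prop) (fun x => ?_)
  rw [mul_neg, Real.sin_neg]

lemma my_gauss_h1 (w : NNReal) (cθ sθ : ℝ) :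
    ∫ x, (cθ * Real.cos x - sθ * Real.sin x) ∂(gaussianReal 0 w)
      = cθ * Real.exp (-(w:ℝ) / 2) := by
  have hic : Integrable (fun x => cθ * Real.cos x) (gaussianReal 0 w) := by
    refine my_integrable_of_bdd (Measurable.aestronglyMeasurable (by fun_prop)) |cθ| (fun x => ?_)
    rw [abs_mul]
    exact mul_le_of_le_one_right (abs_nonneg _) (Real.abs_cos_le_one x)
  have his : Integrable (fun x => sθ * Real.sin x) (gaussianReal 0 w) := by
    refine my_integrable_of_bdd (Measurable.aestronglyMeasurable (by fun_prop)) |sθ| (fun x => ?_)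
    rw [abs_mul]
    exact mul_le_of_le_one_right (abs_nonneg _) (Real.abs_sin_le_one x)
  rw [integral_sub hic his, integral_const_mul, integral_const_mul]
  have h1 : ∫ x, Real.cos x ∂(gaussianReal 0 w) = Real.exp (-(w:ℝ) / 2) := by
    have := my_gauss_cos w 1
    simp only [one_mul, one_pow] at this
    exact this
  have h2 : ∫ x, Real.sin x ∂(gaussianReal 0 w) = 0 := by
    have := my_gauss_sin w 1
    simpa using this
  rw [h1, h2]
  ring

lemma my_gauss_h1sq (w : NNReal) (cθ sθ : ℝ) :
    ∫ x, (cθ * Real.cos x - sθ * Real.sin x) ^ 2 ∂(gaussianReal 0 w)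
      = Real.exp (-(w:ℝ)) * (cθ ^ 2 * Real.cosh (w:ℝ) + sθ ^ 2 * Real.sinh (w:ℝ)) := by
  have hpt : ∀ x : ℝ, (cθ * Real.cos x - sθ * Real.sin x) ^ 2
      = (cθ ^ 2 + sθ ^ 2) / 2 + (cθ ^ 2 - sθ ^ 2) / 2 * Real.cos (2 * x)
        - (cθ * sθ) * Real.sin (2 * x) := by
    intro x
    have hc2 : Real.cos x ^ 2 = 1 / 2 + Real.cos (2 * x) / 2 := Real.cos_sq x
    have hs2' : Real.sin x ^ 2 = 1 / 2 - Real.cos (2 * x) / 2 := by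
      rw [Real.sin_sq, Real.cos_sq]; ring
    have hs2m : Real.sin (2 * x) = 2 * Real.sin x * Real.cos x := Real.sin_two_mul x
    linear_combination cθ ^ 2 * hc2 + sθ ^ 2 * hs2' + (cθ * sθ) * hs2m
  simp_rw [hpt]
  have hi1 : Integrable (fun _ : ℝ => (cθ ^ 2 + sθ ^ 2) / 2) (gaussianReal 0 w) :=
    integrable_const _
  have hi2 : Integrable (fun x : ℝ => (cθ ^ 2 - sθ ^ 2) / 2 * Real.cos (2 * x))
      (gaussianReal 0 w) := by
    refine my_integrable_of_bdd (Measurable.aestronglyMeasurable (by fun_prop)) |(cθ ^ 2 - sθ ^ 2) / 2| (fun x => ?_)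
    rw [abs_mul]
    exact mul_le_of_le_one_right (abs_nonneg _) (Real.abs_cos_le_one _)
  have hi3 : Integrable (fun x : ℝ => (cθ * sθ) * Real.sin (2 * x)) (gaussianReal 0 w) := by
    refine my_integrable_of_bdd (Measurable.aestronglyMeasurable (by fun_prop)) |cθ * sθ| (fun x => ?_)
    rw [abs_mul]
    exact mul_le_of_le_one_right (abs_nonneg _) (Real.abs_sin_le_one _)
  have hi12 : Integrable (fun x : ℝ => (cθ ^ 2 + sθ ^ 2) / 2
      + (cθ ^ 2 - sθ ^ 2) / 2 * Real.cos (2 * x)) (gaussianReal 0 w) := hi1.add hi2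
  rw [integral_sub hi12 hi3, integral_add hi1 hi2, integral_const,
    integral_const_mul, integral_const_mul, my_gauss_cos w 2, my_gauss_sin w 2]
  simp only [measure_univ, probReal_univ, ENNReal.toReal_one, smul_eq_mul, one_mul, mul_zero, sub_zero]
  rw [Real.cosh_eq, Real.sinh_eq]
  have h1 : Real.exp (-(2 ^ 2 * (w:ℝ)) / 2) = Real.exp (-(w:ℝ)) * Real.exp (-(w:ℝ)) := by
    rw [← Real.exp_add]; ring_nf
  have h2 : Real.exp (-(w:ℝ)) * Real.exp (w:ℝ) = 1 := by
    rw [← Real.exp_add]; simp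
  linear_combination ((cθ ^ 2 - sθ ^ 2) / 2) * h1 - ((cθ ^ 2 + sθ ^ 2) / 2) * h2

theorem phasor_noise_real_part_variance {Ω : Type*} [MeasurableSpace Ω]
    (P : Measure Ω) [IsProbabilityMeasure P] (σε σδ : NNReal) (v θ : ℝ)
    (ε δ : Ω → ℝ) (hε : Measurable ε) (hδ : Measurable δ)
    (hmapε : Measure.map ε P = gaussianReal 0 (σε ^ 2))
    (hmapδ : Measure.map δ P = gaussianReal 0 (σδ ^ 2))
    (hindep : IndepFun ε δ P) :
    variance (fun ω => v * Real.cos θ * (Real.cos (δ ω) - 1) - v * Real.sin θ * Real.sin (δ ω)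
        + ε ω * Real.cos θ * Real.cos (δ ω) - ε ω * Real.sin θ * Real.sin (δ ω)) P
      = v ^ 2 * Real.exp (-(σδ : ℝ) ^ 2) *
          (Real.cos θ ^ 2 * (Real.cosh ((σδ : ℝ) ^ 2) - 1)
            + Real.sin θ ^ 2 * Real.sinh ((σδ : ℝ) ^ 2))
        + (σε : ℝ) ^ 2 * Real.exp (-(σδ : ℝ) ^ 2) *
          (Real.cos θ ^ 2 * Real.cosh ((σδ : ℝ) ^ 2)
            + Real.sin θ ^ 2 * Real.sinh ((σδ : ℝ) ^ 2)) := by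
  set cθ := Real.cos θ with hcθ
  set sθ := Real.sin θ with hsθ
  set W : ℝ := ((σδ ^ 2 : NNReal) : ℝ) with hWdef
  have hWc : W = (σδ : ℝ) ^ 2 := by rw [hWdef]; push_cast; ring
  set g1 : Ω → ℝ := fun ω => v + ε ω with hg1def
  set g2 : Ω → ℝ := fun ω => cθ * Real.cos (δ ω) - sθ * Real.sin (δ ω) with hg2def
  -- rewrite the function
  have hfun : (fun ω => v * cθ * (Real.cos (δ ω) - 1) - v * sθ * Real.sin (δ ω)
        + ε ω * cθ * Real.cos (δ ω) - ε ω * sθ * Real.sin (δ ω))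
      = fun ω => g1 ω * g2 ω - v * cθ := by
    funext ω; simp only [hg1def, hg2def]; ring
  rw [hfun]
  -- measurability of the real-variable functions
  have hg2m : Measurable (fun x : ℝ => cθ * Real.cos x - sθ * Real.sin x) := by fun_prop
  have hg1m : Measurable (fun x : ℝ => v + x) := by fun_prop
  -- ε moments
  have hMemε : MeasureTheory.MemLp ε 2 P := by
    have h0 : MeasureTheory.MemLp (id : ℝ → ℝ) 2 (gaussianReal 0 (σε ^ 2)) := by
      refine (memLp_two_iff_integrable_sq aestronglyMeasurable_id).2 ?_
      simpa using my_gauss_integrable_sq (σε ^ 2)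
    have h1 : MeasureTheory.MemLp (id : ℝ → ℝ) 2 (Measure.map ε P) := by rw [hmapε]; exact h0
    have := (memLp_map_measure_iff aestronglyMeasurable_id hε.aemeasurable).1 h1
    simpa [Function.comp] using this
  have hIε : Integrable ε P := by
    have h1 : Integrable (fun x : ℝ => x) (Measure.map ε P) := by
      rw [hmapε]; exact my_gauss_integrable_id (σε ^ 2)
    have := (integrable_map_measure aestronglyMeasurable_id hε.aemeasurable).1 h1
    simpa [Function.comp] using this
  have hIεsq : Integrable (fun ω => ε ω ^ 2) P := hMemε.integrable_sq
  have hEε : ∫ ω, ε ω ∂P = 0 := by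
    have hmi := integral_map (μ := P) (φ := ε) hε.aemeasurable
      (f := fun x : ℝ => x) aestronglyMeasurable_id
    rw [hmapε] at hmi
    rw [← hmi]
    exact my_gauss_odd (σε ^ 2) measurable_id (fun x => rfl)
  have hEεsq : ∫ ω, ε ω ^ 2 ∂P = (σε : ℝ) ^ 2 := by
    have hmi := integral_map (μ := P) (φ := ε) hε.aemeasurable
      (f := fun x : ℝ => x ^ 2) (Measurable.aestronglyMeasurable (by fun_prop))
    rw [hmapε] at hmi
    rw [← hmi, my_gauss_sq]
    push_cast; ring
  -- δ moments
  have hEg2 : ∫ ω, g2 ω ∂P = cθ * Real.exp (-W / 2) := by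
    have hmi := integral_map (μ := P) (φ := δ) hδ.aemeasurable
      (f := fun x : ℝ => cθ * Real.cos x - sθ * Real.sin x)
      (Measurable.aestronglyMeasurable hg2m)
    rw [hmapδ] at hmi
    simp only [hg2def]
    rw [← hmi, my_gauss_h1]
  have hEg2sq : ∫ ω, g2 ω ^ 2 ∂P
      = Real.exp (-W) * (cθ ^ 2 * Real.cosh W + sθ ^ 2 * Real.sinh W) := by
    have hmi := integral_map (μ := P) (φ := δ) hδ.aemeasurable
      (f := fun x : ℝ => (cθ * Real.cos x - sθ * Real.sin x) ^ 2)
      (Measurable.aestronglyMeasurable (by fun_prop))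
    rw [hmapδ] at hmi
    simp only [hg2def]
    rw [← hmi, my_gauss_h1sq]
  -- Memℒp and integrability on Ω
  have hMemg1 : MeasureTheory.MemLp g1 2 P := (memLp_const v).add hMemε
  have hg2meas : Measurable g2 := hg2m.comp hδ
  have hbd : ∀ ω, |g2 ω| ≤ |cθ| + |sθ| := by
    intro ω
    refine (abs_sub _ _).trans ?_
    rw [abs_mul, abs_mul]
    gcongr
    · exact mul_le_of_le_one_right (abs_nonneg _) (Real.abs_cos_le_one _)
    · exact mul_le_of_le_one_right (abs_nonneg _) (Real.abs_sin_le_one _)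
  have hMemg12 : MeasureTheory.MemLp (fun ω => g1 ω * g2 ω) 2 P := by
    refine MeasureTheory.MemLp.of_le_mul (c := |cθ| + |sθ|) hMemg1
      (hMemg1.aestronglyMeasurable.mul hg2meas.aestronglyMeasurable)
      (ae_of_all _ fun ω => ?_)
    rw [Real.norm_eq_abs, Real.norm_eq_abs, abs_mul, mul_comm (|cθ| + |sθ|) _]
    exact mul_le_mul_of_nonneg_left (hbd ω) (abs_nonneg _)
  have hMemf : MeasureTheory.MemLp (fun ω => g1 ω * g2 ω - v * cθ) 2 P :=
    hMemg12.sub (memLp_const (v * cθ))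
  have hIg1 : Integrable g1 P := (integrable_const v).add hIε
  have hIg12 : Integrable (fun ω => g1 ω * g2 ω) P := hMemg12.integrable (by norm_num)
  have hIg12sq : Integrable (fun ω => (g1 ω * g2 ω) ^ 2) P := hMemg12.integrable_sq
  have hIg1sq : Integrable (fun ω => g1 ω ^ 2) P := hMemg1.integrable_sq
  -- independence
  have hind1 : IndepFun g1 g2 P := hindep.comp hg1m hg2m
  have hind2 : IndepFun (fun ω => g1 ω ^ 2) (fun ω => g2 ω ^ 2) P :=
    hindep.comp (show Measurable (fun x : ℝ => (v + x) ^ 2) by fun_prop)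
      (show Measurable (fun x : ℝ => (cθ * Real.cos x - sθ * Real.sin x) ^ 2) by fun_prop)
  -- expectations of products
  have hEg1 : ∫ ω, g1 ω ∂P = v := by
    simp only [hg1def]
    rw [integral_add (integrable_const v) hIε, integral_const, hEε]
    simp
  have hEg1sq : ∫ ω, g1 ω ^ 2 ∂P = v ^ 2 + (σε : ℝ) ^ 2 := by
    have hexp : (fun ω => g1 ω ^ 2) = fun ω => v ^ 2 + (2 * v * ε ω + ε ω ^ 2) := by
      funext ω; simp only [hg1def]; ring
    have hsum : Integrable (fun ω => 2 * v * ε ω + ε ω ^ 2) P :=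
      (hIε.const_mul (2 * v)).add hIεsq
    rw [hexp, integral_add (integrable_const _) hsum,
      integral_add (hIε.const_mul (2 * v)) hIεsq, integral_const, integral_const_mul, hEε, hEεsq]
    simp
  have hEprod : ∫ ω, g1 ω * g2 ω ∂P = v * (cθ * Real.exp (-W / 2)) := by
    have := hind1.integral_fun_mul_eq_mul_integral hMemg1.aestronglyMeasurable hg2meas.aestronglyMeasurable
    have h' : ∫ ω, g1 ω * g2 ω ∂P = (∫ ω, g1 ω ∂P) * ∫ ω, g2 ω ∂P := this
    rw [h', hEg1, hEg2]
  have hEprodsq : ∫ ω, (g1 ω * g2 ω) ^ 2 ∂P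
      = (v ^ 2 + (σε : ℝ) ^ 2)
        * (Real.exp (-W) * (cθ ^ 2 * Real.cosh W + sθ ^ 2 * Real.sinh W)) := by
    have hg1meas : Measurable g1 := hg1m.comp hε
    have hsm1 : AEStronglyMeasurable (fun ω => g1 ω ^ 2) P :=
      (hg1meas.pow_const 2).aestronglyMeasurable
    have hsm2 : AEStronglyMeasurable (fun ω => g2 ω ^ 2) P :=
      ((hg2meas.pow_const 2).aestronglyMeasurable)
    have h := hind2.integral_fun_mul_eq_mul_integral hsm1 hsm2
    have h' : ∫ ω, g1 ω ^ 2 * g2 ω ^ 2 ∂P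
        = (∫ ω, g1 ω ^ 2 ∂P) * ∫ ω, g2 ω ^ 2 ∂P := h
    have hexp : (fun ω => (g1 ω * g2 ω) ^ 2) = fun ω => g1 ω ^ 2 * g2 ω ^ 2 := by
      funext ω; ring
    rw [hexp, h', hEg1sq, hEg2sq]
  -- put it together
  rw [variance_eq_sub hMemf]
  have hsq : (fun ω => g1 ω * g2 ω - v * cθ) ^ 2
      = fun ω => (g1 ω * g2 ω) ^ 2 - 2 * (v * cθ) * (g1 ω * g2 ω) + (v * cθ) ^ 2 := by
    funext ω; simp only [Pi.pow_apply]; ring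
  have hEfsq : ∫ ω, ((fun ω => g1 ω * g2 ω - v * cθ) ^ 2) ω ∂P
      = (v ^ 2 + (σε : ℝ) ^ 2)
          * (Real.exp (-W) * (cθ ^ 2 * Real.cosh W + sθ ^ 2 * Real.sinh W))
        - 2 * (v * cθ) * (v * (cθ * Real.exp (-W / 2))) + (v * cθ) ^ 2 := by
    simp only [hsq]
    have hI1 : Integrable (fun ω => (g1 ω * g2 ω) ^ 2
        - 2 * (v * cθ) * (g1 ω * g2 ω)) P := hIg12sq.sub (hIg12.const_mul _)
    rw [show (fun ω => (g1 ω * g2 ω) ^ 2 - 2 * (v * cθ) * (g1 ω * g2 ω) + (v * cθ) ^ 2)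
        = (fun ω => ((g1 ω * g2 ω) ^ 2 - 2 * (v * cθ) * (g1 ω * g2 ω)) + (v * cθ) ^ 2)
        from rfl]
    rw [integral_add hI1 (integrable_const _), integral_sub hIg12sq (hIg12.const_mul _),
      integral_const_mul, integral_const, hEprodsq, hEprod]
    simp
  have hEf : ∫ ω, g1 ω * g2 ω - v * cθ ∂P = v * (cθ * Real.exp (-W / 2)) - v * cθ := by
    rw [integral_sub hIg12 (integrable_const _), integral_const, hEprod]
    simp
  rw [hEfsq, hEf]
  rw [← hWc]
  have hA : Real.exp (-W / 2) * Real.exp (-W / 2) = Real.exp (-W) := by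
    rw [← Real.exp_add]; ring_nf
  linear_combination (-(v ^ 2 * cθ ^ 2)) * hA
end

section
/- Let ε ~ N(0, σ_ε²) and δ ~ N(0, σ_δ²) be independent, v, θ real, Δc and Δd the real and imaginary Cartesian phasor errors as defined by Δc = v cosθ(cos δ − 1) − v sinθ sin δ + ε cosθ cos δ − ε sinθ sin δ and Δd = v sinθ(cos δ − 1) + v cosθ sin δ + ε sinθ cos δ + ε cosθ sin δ. Then Cov[Δc, Δd] = sinθ cosθ e^{-2σ_δ²} [σ_ε² + v² (1 − e^{σ_δ²})]. -/
open MeasureTheory ProbabilityTheory Real Set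

open Complex in
lemma cos_gauss_volume {b : ℝ} (hb : 0 < b) (t : ℝ) :
    ∫ x : ℝ, Real.cos (t * x) * Real.exp (-b * x ^ 2)
      = Real.sqrt (Real.pi / b) * Real.exp (-t ^ 2 / (4 * b)) := by
  have hb' : (0:ℝ) < (b:ℂ).re := by simpa using hb
  have hF := fourierIntegral_gaussian (b := (b:ℂ)) hb' (t : ℂ)
  have hInt : Integrable (fun x : ℝ => Complex.exp (I * t * x) * Complex.exp (-(b:ℂ) * x ^ 2)) := by
    have h := integrable_cexp_quadratic (b := (b:ℂ)) hb' (I * t) 0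
    refine h.congr ?_
    filter_upwards with x
    rw [← Complex.exp_add]
    ring_nf
  have hre : ∀ x : ℝ, (Complex.exp (I * t * x) * Complex.exp (-(b:ℂ) * x ^ 2)).re
      = Real.cos (t * x) * Real.exp (-b * x ^ 2) := by
    intro x
    have h1 : I * (t:ℂ) * (x:ℂ) = ((t * x : ℝ) : ℂ) * I := by push_cast; ring
    have h2 : -(b:ℂ) * (x:ℂ) ^ 2 = ((-b * x ^ 2 : ℝ) : ℂ) := by push_cast; ring
    rw [h1, h2, ← Complex.ofReal_exp, Complex.mul_re, Complex.exp_ofReal_mul_I_re]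
    simp [← Complex.ofReal_exp]
  have hRHS : ((Real.pi : ℂ) / (b:ℂ)) ^ (1/2 : ℂ) * Complex.exp (-(t:ℂ) ^ 2 / (4 * (b:ℂ)))
      = ((Real.sqrt (Real.pi / b) * Real.exp (-t ^ 2 / (4 * b)) : ℝ) : ℂ) := by
    have hpb : (0:ℝ) ≤ Real.pi / b := by positivity
    have h3 : ((Real.pi : ℂ) / (b:ℂ)) = ((Real.pi / b : ℝ) : ℂ) := by push_cast; ring
    have h4 : (1/2 : ℂ) = ((1/2 : ℝ) : ℂ) := by norm_num
    have h5 : -(t:ℂ) ^ 2 / (4 * (b:ℂ)) = ((-t ^ 2 / (4 * b) : ℝ) : ℂ) := by push_cast; ring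
    rw [h3, h4, h5, ← Complex.ofReal_cpow hpb, ← Complex.ofReal_exp, ← Complex.ofReal_mul,
      Real.sqrt_eq_rpow]
  calc ∫ x : ℝ, Real.cos (t * x) * Real.exp (-b * x ^ 2)
      = ∫ x : ℝ, (Complex.exp (I * t * x) * Complex.exp (-(b:ℂ) * x ^ 2)).re := by
        simp_rw [hre]
    _ = (∫ x : ℝ, Complex.exp (I * t * x) * Complex.exp (-(b:ℂ) * x ^ 2)).re := by
        rw [← RCLike.re_eq_complex_re, ← integral_re hInt]
    _ = _ := by rw [hF, hRHS, Complex.ofReal_re]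

lemma gauss_integral_eq (v : NNReal) (hv : v ≠ 0) (f : ℝ → ℝ) :
    ∫ x, f x ∂(gaussianReal 0 v) = ∫ x, f x * gaussianPDFReal 0 v x := by
  rw [gaussianReal_of_var_ne_zero 0 hv]
  have h1 : (gaussianPDF 0 v) = fun x => ((Real.toNNReal (gaussianPDFReal 0 v x) : NNReal) : ENNReal) := by
    ext x; rw [gaussianPDF]; rfl
  rw [h1, integral_withDensity_eq_integral_smul]
  · congr 1; ext x
    rw [NNReal.smul_def, smul_eq_mul, Real.coe_toNNReal _ (gaussianPDFReal_nonneg 0 v x), mul_comm]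
  · exact (measurable_gaussianPDFReal 0 v).real_toNNReal

lemma gauss_pdf_eq (v : NNReal) :
    gaussianPDFReal 0 v = fun x => (Real.sqrt (2 * π * v))⁻¹ * rexp (-(2 * (v:ℝ))⁻¹ * x ^ 2) := by
  ext x
  rw [gaussianPDFReal]
  congr 1
  rw [sub_zero, div_eq_mul_inv]
  ring

lemma gauss_map_neg (v : NNReal) :
    (gaussianReal 0 v).map (fun x => -x) = gaussianReal 0 v := by
  have h := gaussianReal_map_const_mul (μ := 0) (v := v) (-1)
  have h2 : (fun x : ℝ => -1 * x) = fun x : ℝ => -x := by funext x; ring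
  rw [h2] at h
  rw [h]
  congr 1
  · ring
  · ext; norm_num

lemma gauss_odd (v : NNReal) (f : ℝ → ℝ) (hf : Measurable f)
    (hodd : ∀ x, f (-x) = - f x) : ∫ x, f x ∂(gaussianReal 0 v) = 0 := by
  have h := integral_map (μ := gaussianReal 0 v) (φ := fun x : ℝ => -x) (f := f)
    measurable_neg.aemeasurable (by rw [gauss_map_neg]; exact hf.aestronglyMeasurable)
  rw [gauss_map_neg] at h
  simp_rw [hodd, integral_neg] at h
  linarith

lemma gauss_sin (v : NNReal) (t : ℝ) :
    ∫ x, Real.sin (t * x) ∂(gaussianReal 0 v) = 0 := by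
  refine gauss_odd v _ (by fun_prop) (fun x => ?_)
  rw [show t * (-x) = -(t * x) by ring, Real.sin_neg]

lemma gauss_id (v : NNReal) : ∫ x, x ∂(gaussianReal 0 v) = 0 :=
  gauss_odd v _ measurable_id (fun x => rfl)



lemma gauss_cos (v : NNReal) (t : ℝ) :
    ∫ x, Real.cos (t * x) ∂(gaussianReal 0 v) = rexp (-((v:ℝ) * t ^ 2) / 2) := by
  by_cases hv : v = 0
  · subst hv
    rw [gaussianReal_zero_var, integral_dirac]
    simp
  · have hv0 : (0:ℝ) < (v : ℝ) := by positivity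
    have hb : (0:ℝ) < (2 * (v:ℝ))⁻¹ := by positivity
    rw [gauss_integral_eq v hv, gauss_pdf_eq v]
    simp_rw [mul_left_comm _ ((Real.sqrt (2 * π * (v:ℝ)))⁻¹) _]
    rw [integral_const_mul, cos_gauss_volume hb t]
    have h1 : π / (2 * (v:ℝ))⁻¹ = 2 * π * (v:ℝ) := by field_simp
    have h2 : -t ^ 2 / (4 * (2 * (v:ℝ))⁻¹) = -((v:ℝ) * t ^ 2) / 2 := by
      field_simp
      ring
    rw [h1, h2, ← mul_assoc, inv_mul_cancel₀ (by positivity), one_mul]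

lemma sq_gauss_volume {b : ℝ} (hb : 0 < b) :
    ∫ x : ℝ, x ^ 2 * Real.exp (-b * x ^ 2)
      = Real.sqrt π * b ^ (-(3:ℝ)/2) / 2 := by
  have hrpow : ∀ x : ℝ, x ^ ((2:ℝ)) = x ^ 2 := fun x => by
    rw [show (2:ℝ) = ((2:ℕ):ℝ) by norm_num, Real.rpow_natCast]
  have heven : ∫ x : ℝ, x ^ 2 * Real.exp (-b * x ^ 2)
      = 2 * ∫ x in Ioi (0:ℝ), x ^ 2 * Real.exp (-b * x ^ 2) := by
    rw [← integral_comp_abs (f := fun x => x ^ 2 * Real.exp (-b * x ^ 2))]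
    congr 1
    funext x
    rw [sq_abs]
  have hIoi := integral_rpow_mul_exp_neg_mul_rpow (p := 2) (q := 2) (b := b)
    (by norm_num) (by norm_num) hb
  simp_rw [hrpow] at hIoi
  rw [heven, hIoi]
  have hGamma : Real.Gamma ((2 + 1) / 2) = Real.sqrt π / 2 := by
    rw [show ((2:ℝ) + 1) / 2 = 1/2 + 1 by norm_num, Real.Gamma_add_one (by norm_num),
      Real.Gamma_one_half_eq]
    ring
  rw [hGamma, show (-((2:ℝ) + 1) / 2) = -(3:ℝ)/2 by norm_num]
  ring

lemma gauss_sq (v : NNReal) : ∫ x, x ^ 2 ∂(gaussianReal 0 v) = (v : ℝ) := by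
  by_cases hv : v = 0
  · subst hv
    rw [gaussianReal_zero_var, integral_dirac]
    simp
  · have hv0 : (0:ℝ) < (v : ℝ) := by positivity
    have hb : (0:ℝ) < (2 * (v:ℝ))⁻¹ := by positivity
    rw [gauss_integral_eq v hv, gauss_pdf_eq v]
    simp_rw [mul_left_comm _ ((Real.sqrt (2 * π * (v:ℝ)))⁻¹) _]
    rw [integral_const_mul, sq_gauss_volume hb]
    have h2v : (0:ℝ) < 2 * (v:ℝ) := by positivity
    have h32 : ((2 * (v:ℝ))⁻¹) ^ (-(3:ℝ)/2) = 2 * (v:ℝ) * Real.sqrt (2 * (v:ℝ)) := by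
      rw [show (-(3:ℝ)/2) = -((3:ℝ)/2) by norm_num, Real.inv_rpow h2v.le,
        Real.rpow_neg h2v.le, inv_inv, show ((3:ℝ)/2) = 1 + 1/2 by norm_num,
        Real.rpow_add h2v, Real.rpow_one, ← Real.sqrt_eq_rpow]
    have hS : Real.sqrt (2 * (v:ℝ)) * Real.sqrt π = Real.sqrt (2 * π * (v:ℝ)) := by
      rw [← Real.sqrt_mul h2v.le]
      ring_nf
    have hSne : Real.sqrt (2 * π * (v:ℝ)) ≠ 0 := by positivity
    rw [h32]
    rw [inv_mul_eq_iff_eq_mul₀ hSne]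
    linear_combination (v:ℝ) * hS

lemma gauss_integrable (v : NNReal) (f : ℝ → ℝ) (hfm : Measurable f)
    (hint : ∀ b : ℝ, 0 < b → Integrable (fun x => f x * rexp (-b * x ^ 2))) :
    Integrable f (gaussianReal 0 v) := by
  by_cases hv : v = 0
  · subst hv
    rw [gaussianReal_zero_var]
    exact (integrable_const (f 0)).congr (ae_eq_dirac f).symm
  · have hv0 : (0:ℝ) < (v:ℝ) := by positivity
    rw [gaussianReal_of_var_ne_zero 0 hv]
    rw [integrable_withDensity_iff (measurable_gaussianPDF 0 v)
      (Filter.Eventually.of_forall fun x => ENNReal.ofReal_lt_top)]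
    have hpt : (fun x => f x * (gaussianPDF 0 v x).toReal)
        = fun x => (Real.sqrt (2 * π * (v:ℝ)))⁻¹ * (f x * rexp (-(2 * (v:ℝ))⁻¹ * x ^ 2)) := by
      funext x
      rw [gaussianPDF, ENNReal.toReal_ofReal (gaussianPDFReal_nonneg 0 v x), gauss_pdf_eq v]
      ring
    rw [hpt]
    exact (hint _ (by positivity)).const_mul _

lemma gauss_integrable_id (v : NNReal) : Integrable (fun x : ℝ => x) (gaussianReal 0 v) :=
  gauss_integrable v _ measurable_id fun b hb => integrable_mul_exp_neg_mul_sq hb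

lemma gauss_integrable_sq (v : NNReal) : Integrable (fun x : ℝ => x ^ 2) (gaussianReal 0 v) := by
  refine gauss_integrable v _ (by fun_prop) fun b hb => ?_
  have h := integrable_rpow_mul_exp_neg_mul_sq hb (s := 2) (by norm_num)
  refine h.congr ?_
  filter_upwards with x
  rw [show ((2:ℝ)) = ((2:ℕ):ℝ) by norm_num, Real.rpow_natCast]

theorem phasor_noise_covariance {Ω : Type*} [MeasurableSpace Ω]
    (P : Measure Ω) [IsProbabilityMeasure P] (σε σδ : NNReal) (v θ : ℝ)
    (ε δ : Ω → ℝ) (hε : Measurable ε) (hδ : Measurable δ)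
    (hmapε : Measure.map ε P = gaussianReal 0 (σε ^ 2))
    (hmapδ : Measure.map δ P = gaussianReal 0 (σδ ^ 2))
    (hindep : IndepFun ε δ P)
    (Δc Δd : Ω → ℝ)
    (hΔc : Δc = fun ω => v * Real.cos θ * (Real.cos (δ ω) - 1) - v * Real.sin θ * Real.sin (δ ω)
        + ε ω * Real.cos θ * Real.cos (δ ω) - ε ω * Real.sin θ * Real.sin (δ ω))
    (hΔd : Δd = fun ω => v * Real.sin θ * (Real.cos (δ ω) - 1) + v * Real.cos θ * Real.sin (δ ω)
        + ε ω * Real.sin θ * Real.cos (δ ω) + ε ω * Real.cos θ * Real.sin (δ ω)) :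
    (∫ ω, Δc ω * Δd ω ∂P) - (∫ ω, Δc ω ∂P) * (∫ ω, Δd ω ∂P)
      = Real.sin θ * Real.cos θ * Real.exp (-2 * (σδ : ℝ) ^ 2) *
          ((σε : ℝ) ^ 2 + v ^ 2 * (1 - Real.exp ((σδ : ℝ) ^ 2))) := by
  -- transfer of integrals along the distribution maps
  have transferδ : ∀ g : ℝ → ℝ, Measurable g →
      ∫ ω, g (δ ω) ∂P = ∫ x, g x ∂(gaussianReal 0 (σδ ^ 2)) := by
    intro g hg
    rw [← hmapδ, integral_map hδ.aemeasurable hg.aestronglyMeasurable]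
  have transferε : ∀ g : ℝ → ℝ, Measurable g →
      ∫ ω, g (ε ω) ∂P = ∫ x, g x ∂(gaussianReal 0 (σε ^ 2)) := by
    intro g hg
    rw [← hmapε, integral_map hε.aemeasurable hg.aestronglyMeasurable]
  -- integrability of ε and ε^2
  have intε : Integrable ε P := by
    have h0 : Integrable (fun x : ℝ => x) (Measure.map ε P) := by
      rw [hmapε]; exact gauss_integrable_id _
    exact (integrable_map_measure measurable_id.aestronglyMeasurable hε.aemeasurable).mp h0
  have intε2 : Integrable (fun ω => ε ω ^ 2) P := by
    have h0 : Integrable (fun x : ℝ => x ^ 2) (Measure.map ε P) := by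
      rw [hmapε]; exact gauss_integrable_sq _
    exact (integrable_map_measure (by fun_prop) hε.aemeasurable).mp h0
  have intX : Integrable (fun ω => v + ε ω) P := (integrable_const v).add intε
  have intX2 : Integrable (fun ω => (v + ε ω) ^ 2) P := by
    have h : (fun ω => (v + ε ω) ^ 2) = fun ω => v ^ 2 + (2 * v * ε ω + ε ω ^ 2) := by
      funext ω; ring
    rw [h]
    have hg1 : Integrable (fun ω => 2 * v * ε ω) P := intε.const_mul (2*v)
    exact (integrable_const _).add (hg1.add intε2)
  -- integrability of products
  have intProd : ∀ (F G : ℝ → ℝ), Measurable F → Measurable G →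
      Integrable (fun ω => F (ε ω)) P → (∀ y, |G y| ≤ 1) →
      Integrable (fun ω => F (ε ω) * G (δ ω)) P := by
    intro F G hF hG hFi hGb
    refine hFi.abs.mono' ((hF.comp hε).mul (hG.comp hδ)).aestronglyMeasurable ?_
    filter_upwards with ω
    rw [Real.norm_eq_abs, abs_mul]
    calc |F (ε ω)| * |G (δ ω)| ≤ |F (ε ω)| * 1 :=
          mul_le_mul_of_nonneg_left (hGb (δ ω)) (abs_nonneg _)
      _ = |F (ε ω)| := mul_one _
  -- basic expectations
  have Eε : ∫ ω, ε ω ∂P = 0 := by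
    have h := transferε (fun x => x) measurable_id
    simpa [gauss_id] using h
  have Eε2 : ∫ ω, ε ω ^ 2 ∂P = (σε : ℝ) ^ 2 := by
    have h := transferε (fun x => x ^ 2) (by fun_prop)
    rw [gauss_sq] at h
    simpa [NNReal.coe_pow] using h
  have EX : ∫ ω, (v + ε ω) ∂P = v := by
    rw [integral_add (integrable_const v) intε, Eε, integral_const]
    simp
  have EX2 : ∫ ω, (v + ε ω) ^ 2 ∂P = v ^ 2 + (σε : ℝ) ^ 2 := by
    have h : (fun ω => (v + ε ω) ^ 2) = fun ω => v ^ 2 + (2 * v * ε ω + ε ω ^ 2) := by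
      funext ω; ring
    have hg1 : Integrable (fun ω => 2 * v * ε ω) P := intε.const_mul (2*v)
    have hg : Integrable (fun ω => 2 * v * ε ω + ε ω ^ 2) P := hg1.add intε2
    rw [h, integral_add (integrable_const _) hg,
      integral_add hg1 intε2, integral_const_mul, Eε, Eε2, integral_const]
    simp
  have Ecosδ : ∫ ω, Real.cos (δ ω) ∂P = rexp (-(σδ : ℝ) ^ 2 / 2) := by
    have h := transferδ (fun y => Real.cos (1 * y)) (by fun_prop)
    rw [gauss_cos] at h
    simp only [one_mul] at h
    rw [h]
    congr 1
    push_cast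
    ring
  have Esinδ : ∫ ω, Real.sin (δ ω) ∂P = 0 := by
    have h := transferδ (fun y => Real.sin (1 * y)) (by fun_prop)
    rw [gauss_sin] at h
    simpa using h
  have Ecos2δ : ∫ ω, Real.cos (2 * δ ω) ∂P = rexp (-2 * (σδ : ℝ) ^ 2) := by
    have h := transferδ (fun y => Real.cos (2 * y)) (by fun_prop)
    rw [gauss_cos] at h
    rw [h]
    congr 1
    push_cast
    ring
  have Esin2δ : ∫ ω, Real.sin (2 * δ ω) ∂P = 0 := by
    have h := transferδ (fun y => Real.sin (2 * y)) (by fun_prop)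
    rw [gauss_sin] at h
    exact h
  -- product expectations via independence
  have prodInt : ∀ (F G : ℝ → ℝ), Measurable F → Measurable G →
      Integrable (fun ω => F (ε ω)) P → Integrable (fun ω => G (δ ω)) P →
      ∫ ω, F (ε ω) * G (δ ω) ∂P = (∫ ω, F (ε ω) ∂P) * ∫ ω, G (δ ω) ∂P := by
    intro F G hF hG hFi hGi
    have h := IndepFun.integral_mul_eq_mul_integral (hindep.comp hF hG) hFi.aestronglyMeasurable hGi.aestronglyMeasurable
    simpa [Function.comp] using h
  have intcosδ : Integrable (fun ω => Real.cos (δ ω)) P := by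
    have := intProd (fun _ => 1) Real.cos measurable_const Real.measurable_cos
      (integrable_const 1) (fun y => Real.abs_cos_le_one y)
    simpa using this
  have intsinδ : Integrable (fun ω => Real.sin (δ ω)) P := by
    have := intProd (fun _ => 1) Real.sin measurable_const Real.measurable_sin
      (integrable_const 1) (fun y => Real.abs_sin_le_one y)
    simpa using this
  have intcos2δ : Integrable (fun ω => Real.cos (2 * δ ω)) P := by
    have := intProd (fun _ => 1) (fun y => Real.cos (2 * y)) measurable_const (by fun_prop)
      (integrable_const 1) (fun y => Real.abs_cos_le_one _)
    simpa using this
  have intsin2δ : Integrable (fun ω => Real.sin (2 * δ ω)) P := by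
    have := intProd (fun _ => 1) (fun y => Real.sin (2 * y)) measurable_const (by fun_prop)
      (integrable_const 1) (fun y => Real.abs_sin_le_one _)
    simpa using this
  have hmX : Measurable (fun x : ℝ => v + x) := by fun_prop
  have hmX2 : Measurable (fun x : ℝ => (v + x) ^ 2) := by fun_prop
  have A1 : ∫ ω, (v + ε ω) * Real.cos (δ ω) ∂P = v * rexp (-(σδ : ℝ) ^ 2 / 2) := by
    rw [prodInt (fun x => v + x) Real.cos hmX Real.measurable_cos intX intcosδ, EX, Ecosδ]
  have A2 : ∫ ω, (v + ε ω) * Real.sin (δ ω) ∂P = 0 := by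
    rw [prodInt (fun x => v + x) Real.sin hmX Real.measurable_sin intX intsinδ, EX, Esinδ,
      mul_zero]
  have A3 : ∫ ω, (v + ε ω) ^ 2 * Real.cos (2 * δ ω) ∂P
      = (v ^ 2 + (σε : ℝ) ^ 2) * rexp (-2 * (σδ : ℝ) ^ 2) := by
    rw [prodInt (fun x => (v + x) ^ 2) (fun y => Real.cos (2 * y)) hmX2 (by fun_prop)
      intX2 intcos2δ, EX2, Ecos2δ]
  have A4 : ∫ ω, (v + ε ω) ^ 2 * Real.sin (2 * δ ω) ∂P = 0 := by
    rw [prodInt (fun x => (v + x) ^ 2) (fun y => Real.sin (2 * y)) hmX2 (by fun_prop)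
      intX2 intsin2δ, EX2, Esin2δ, mul_zero]
  -- integrability of products needed for splitting
  have intXcos : Integrable (fun ω => (v + ε ω) * Real.cos (δ ω)) P :=
    intProd (fun x => v + x) Real.cos hmX Real.measurable_cos intX Real.abs_cos_le_one
  have intXsin : Integrable (fun ω => (v + ε ω) * Real.sin (δ ω)) P :=
    intProd (fun x => v + x) Real.sin hmX Real.measurable_sin intX Real.abs_sin_le_one
  have intX2cos2 : Integrable (fun ω => (v + ε ω) ^ 2 * Real.cos (2 * δ ω)) P :=
    intProd (fun x => (v + x) ^ 2) (fun y => Real.cos (2 * y)) hmX2 (by fun_prop) intX2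
      (fun y => Real.abs_cos_le_one _)
  have intX2sin2 : Integrable (fun ω => (v + ε ω) ^ 2 * Real.sin (2 * δ ω)) P :=
    intProd (fun x => (v + x) ^ 2) (fun y => Real.sin (2 * y)) hmX2 (by fun_prop) intX2
      (fun y => Real.abs_sin_le_one _)
  -- compute ∫ Δc and ∫ Δd
  have hΔc' : Δc = fun ω => Real.cos θ * ((v + ε ω) * Real.cos (δ ω))
      - Real.sin θ * ((v + ε ω) * Real.sin (δ ω)) - v * Real.cos θ := by
    rw [hΔc]; funext ω; ring
  have hΔd' : Δd = fun ω => Real.sin θ * ((v + ε ω) * Real.cos (δ ω))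
      + Real.cos θ * ((v + ε ω) * Real.sin (δ ω)) - v * Real.sin θ := by
    rw [hΔd]; funext ω; ring
  have EΔc : ∫ ω, Δc ω ∂P = v * Real.cos θ * (rexp (-(σδ : ℝ) ^ 2 / 2) - 1) := by
    rw [hΔc']
    have j1 : Integrable (fun ω => Real.cos θ * ((v + ε ω) * Real.cos (δ ω))) P :=
      intXcos.const_mul _
    have j2 : Integrable (fun ω => Real.sin θ * ((v + ε ω) * Real.sin (δ ω))) P :=
      intXsin.const_mul _
    have j12 : Integrable (fun ω => Real.cos θ * ((v + ε ω) * Real.cos (δ ω))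
        - Real.sin θ * ((v + ε ω) * Real.sin (δ ω))) P := j1.sub j2
    rw [integral_sub j12 (integrable_const _), integral_sub j1 j2, integral_const_mul,
      integral_const_mul, A1, A2, integral_const]
    simp
    ring
  have EΔd : ∫ ω, Δd ω ∂P = v * Real.sin θ * (rexp (-(σδ : ℝ) ^ 2 / 2) - 1) := by
    rw [hΔd']
    have j1 : Integrable (fun ω => Real.sin θ * ((v + ε ω) * Real.cos (δ ω))) P :=
      intXcos.const_mul _
    have j2 : Integrable (fun ω => Real.cos θ * ((v + ε ω) * Real.sin (δ ω))) P :=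
      intXsin.const_mul _
    have j12 : Integrable (fun ω => Real.sin θ * ((v + ε ω) * Real.cos (δ ω))
        + Real.cos θ * ((v + ε ω) * Real.sin (δ ω))) P := j1.add j2
    rw [integral_sub j12 (integrable_const _), integral_add j1 j2, integral_const_mul,
      integral_const_mul, A1, A2, integral_const]
    simp
    ring
  -- key pointwise identity for the product
  have key : (fun ω => Δc ω * Δd ω) = fun ω =>
      Real.sin θ * Real.cos θ * ((v + ε ω) ^ 2 * Real.cos (2 * δ ω))
      + (Real.cos θ ^ 2 - Real.sin θ ^ 2) / 2 * ((v + ε ω) ^ 2 * Real.sin (2 * δ ω))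
      + (-(2 * v * Real.sin θ * Real.cos θ)) * ((v + ε ω) * Real.cos (δ ω))
      + v * (Real.sin θ ^ 2 - Real.cos θ ^ 2) * ((v + ε ω) * Real.sin (δ ω))
      + v ^ 2 * Real.sin θ * Real.cos θ := by
    funext ω
    rw [hΔc, hΔd, Real.cos_two_mul, Real.sin_two_mul]
    linear_combination (-(v + ε ω) ^ 2 * Real.sin θ * Real.cos θ) * Real.sin_sq_add_cos_sq (δ ω)
  have EΔcΔd : ∫ ω, Δc ω * Δd ω ∂P =
      Real.sin θ * Real.cos θ * ((v ^ 2 + (σε : ℝ) ^ 2) * rexp (-2 * (σδ : ℝ) ^ 2))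
      + (-(2 * v * Real.sin θ * Real.cos θ)) * (v * rexp (-(σδ : ℝ) ^ 2 / 2))
      + v ^ 2 * Real.sin θ * Real.cos θ := by
    rw [key]
    have i1 : Integrable (fun ω => Real.sin θ * Real.cos θ * ((v + ε ω) ^ 2 * Real.cos (2 * δ ω))) P :=
      intX2cos2.const_mul _
    have i2 : Integrable (fun ω => (Real.cos θ ^ 2 - Real.sin θ ^ 2) / 2 * ((v + ε ω) ^ 2 * Real.sin (2 * δ ω))) P :=
      intX2sin2.const_mul _
    have i3 : Integrable (fun ω => (-(2 * v * Real.sin θ * Real.cos θ)) * ((v + ε ω) * Real.cos (δ ω))) P :=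
      intXcos.const_mul _
    have i4 : Integrable (fun ω => v * (Real.sin θ ^ 2 - Real.cos θ ^ 2) * ((v + ε ω) * Real.sin (δ ω))) P :=
      intXsin.const_mul _
    have i12 : Integrable (fun ω => Real.sin θ * Real.cos θ * ((v + ε ω) ^ 2 * Real.cos (2 * δ ω))
        + (Real.cos θ ^ 2 - Real.sin θ ^ 2) / 2 * ((v + ε ω) ^ 2 * Real.sin (2 * δ ω))) P := i1.add i2
    have i123 : Integrable (fun ω => Real.sin θ * Real.cos θ * ((v + ε ω) ^ 2 * Real.cos (2 * δ ω))
        + (Real.cos θ ^ 2 - Real.sin θ ^ 2) / 2 * ((v + ε ω) ^ 2 * Real.sin (2 * δ ω))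
        + (-(2 * v * Real.sin θ * Real.cos θ)) * ((v + ε ω) * Real.cos (δ ω))) P := i12.add i3
    have i1234 : Integrable (fun ω => Real.sin θ * Real.cos θ * ((v + ε ω) ^ 2 * Real.cos (2 * δ ω))
        + (Real.cos θ ^ 2 - Real.sin θ ^ 2) / 2 * ((v + ε ω) ^ 2 * Real.sin (2 * δ ω))
        + (-(2 * v * Real.sin θ * Real.cos θ)) * ((v + ε ω) * Real.cos (δ ω))
        + v * (Real.sin θ ^ 2 - Real.cos θ ^ 2) * ((v + ε ω) * Real.sin (δ ω))) P := i123.add i4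
    rw [integral_add i1234 (integrable_const _),
      integral_add i123 i4, integral_add i12 i3, integral_add i1 i2,
      integral_const_mul, integral_const_mul, integral_const_mul, integral_const_mul,
      A1, A2, A3, A4, integral_const]
    simp
  -- final algebra
  rw [EΔcΔd, EΔc, EΔd]
  have hE1 : rexp (-(σδ : ℝ) ^ 2 / 2) * rexp (-(σδ : ℝ) ^ 2 / 2)
      = rexp (-2 * (σδ : ℝ) ^ 2) * rexp ((σδ : ℝ) ^ 2) := by
    rw [← Real.exp_add, ← Real.exp_add]
    congr 1
    ring
  linear_combination (-(Real.sin θ * Real.cos θ * v ^ 2)) * hE1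
end
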